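/- Let n be a natural number and let x, x̃ ∈ ℝⁿ have all coordinates positive. Then ∏_{i=1}^{n} 1/x_i ≥ (∏_{i=1}^{n} 1/x̃_i) · ( n + 1 − ∑_{i=1}^{n} x_i/x̃_i ). -/

import Mathlib

open Finset

lemma key_amgm (n : ℕ) (t : Fin n → ℝ) (ht : ∀ i, 0 < t i) :
    (n : ℝ) + 1 - ∑ i, t i ≤ ∏ i, (t i)⁻¹ := by
  set z : Fin (n + 1) → ℝ := Fin.snoc t (∏ i, (t i)⁻¹) with hz
  have hzpos : ∀ i, 0 < z i := by
    intro i
    refine Fin.lastCases ?_ ?_ i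
    · rw [hz]; rw [Fin.snoc_last]
      exact Finset.prod_pos fun i _ => inv_pos.2 (ht i)
    · intro j; simpa [hz] using ht j
  have hw : ∑ _i : Fin (n + 1), (1 : ℝ) / (n + 1) = 1 := by
    rw [Finset.sum_const, Finset.card_univ, Fintype.card_fin]
    rw [nsmul_eq_mul]; push_cast
    field_simp
  have h := Real.geom_mean_le_arith_mean_weighted Finset.univ
    (fun _ => (1 : ℝ) / (n + 1)) z
    (fun i _ => by positivity) hw (fun i _ => (hzpos i).le)
  have hprodz : ∏ i, z i = 1 := by
    rw [hz, Fin.prod_snoc, Finset.prod_inv_distrib, mul_inv_cancel₀]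
    exact ne_of_gt (Finset.prod_pos fun i _ => ht i)
  have hlhs : (∏ i, z i ^ ((1 : ℝ) / (n + 1))) = 1 := by
    rw [Real.finset_prod_rpow _ _ (fun i _ => (hzpos i).le), hprodz, Real.one_rpow]
  rw [hlhs] at h
  have hsum : ∑ i, (1 : ℝ) / (n + 1) * z i = (∑ i, t i + ∏ i, (t i)⁻¹) / (n + 1) := by
    rw [← Finset.mul_sum, hz, Fin.sum_snoc]
    ring
  rw [hsum, le_div_iff₀ (by positivity)] at h
  linarith
/-- First-order lower bound (inequality (33) of the paper) of the jointly convex function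
`x ↦ ∏_i 1/x_i` at a point `x̃` with positive coordinates. -/
theorem prod_inv_first_order_bound (n : ℕ) (x xt : Fin n → ℝ)
    (hx : ∀ i, 0 < x i) (hxt : ∀ i, 0 < xt i) :
    (∏ i, 1 / xt i) * ((n : ℝ) + 1 - ∑ i, x i / xt i) ≤ ∏ i, 1 / x i := by
  have h := key_amgm n (fun i => x i / xt i) (fun i => div_pos (hx i) (hxt i))
  have hp : (0 : ℝ) < ∏ i, 1 / xt i :=
    Finset.prod_pos fun i _ => one_div_pos.2 (hxt i)
  have heq : (∏ i, 1 / xt i) * ∏ i, (x i / xt i)⁻¹ = ∏ i, 1 / x i := by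
    rw [← Finset.prod_mul_distrib]
    refine Finset.prod_congr rfl fun i _ => ?_
    have h1 := (hxt i).ne'
    have h2 := (hx i).ne'
    field_simp
  calc (∏ i, 1 / xt i) * ((n : ℝ) + 1 - ∑ i, x i / xt i)
      ≤ (∏ i, 1 / xt i) * ∏ i, (x i / xt i)⁻¹ := by
        exact mul_le_mul_of_nonneg_left h hp.le
    _ = ∏ i, 1 / x i := heq
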